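/- Let a : ℕ → ℝ be a bounded sequence and B_n = (1/n) ∑_{i=0}^{n-1} a_i its Birkhoff averages. If the sequence (B_n) does not converge, then for every k ≥ 1 the k-th order Hölder means H^{(k)}_n of (B_n) also do not converge. -/

import Mathlib

open Filter Topology

/-- Birkhoff averages: `birk a n = (1/n) * ∑_{i=0}^{n-1} a i` (junk value `0` at `n = 0`). -/
noncomputable def birk (a : ℕ → ℝ) (n : ℕ) : ℝ := (∑ i ∈ Finset.range n, a i) / n

/-- Iterated Hölder means of a sequence `b` (indexed from 1):
`holderMeans b 0 n = b n` and `holderMeans b (k+1) n = (1/n) * ∑_{i=1}^n holderMeans b k i`. -/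
noncomputable def holderMeans (b : ℕ → ℝ) : ℕ → ℕ → ℝ
  | 0, n => b n
  | k+1, n => (∑ i ∈ Finset.Icc 1 n, holderMeans b k i) / n

section Aux
open Finset


lemma slow_osc {b : ℕ → ℝ} {K : ℝ} (hK : 0 ≤ K)
    (hb : ∀ n, 1 ≤ n → |b (n+1) - b n| ≤ K / n) :
    ∀ n i, 1 ≤ n → n ≤ i → |b i - b n| ≤ K * ((i : ℝ) - n) / n := by
  intro n i hn hni
  induction i with
  | zero => omega
  | succ i ih =>
    rcases Nat.lt_or_ge n (i+1) with h | h
    · have hni' : n ≤ i := by omega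
      have hi1 : 1 ≤ i := by omega
      have h1 := ih hni'
      have h2 := hb i hi1
      have hn0 : (0:ℝ) < n := by exact_mod_cast hn
      have hi0 : (0:ℝ) < i := by exact_mod_cast hi1
      have hKn : K / (i:ℝ) ≤ K / n := by
        gcongr
      calc |b (i+1) - b n| ≤ |b (i+1) - b i| + |b i - b n| := abs_sub_le _ _ _
        _ ≤ K / i + K * ((i:ℝ) - n)/n := add_le_add h2 h1
        _ ≤ K / n + K * ((i:ℝ) - n)/n := by linarith
        _ = K * ((↑(i+1):ℝ) - n)/n := by push_cast; field_simp; ring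
    · have : n = i+1 := by omega
      subst this
      simp


lemma sum_abs_le {b : ℕ → ℝ} {C : ℝ} (hb : ∀ n, |b n| ≤ C) (n : ℕ) :
    |∑ i ∈ Finset.Icc 1 n, b i| ≤ n * C := by
  calc |∑ i ∈ Finset.Icc 1 n, b i| ≤ ∑ i ∈ Finset.Icc 1 n, |b i| :=
        Finset.abs_sum_le_sum_abs _ _
    _ ≤ ∑ i ∈ Finset.Icc 1 n, C := Finset.sum_le_sum (fun i _ => hb i)
    _ = n * C := by simp [Nat.card_Icc]

lemma cesaro_abs {b : ℕ → ℝ} {C : ℝ} (hC : 0 ≤ C) (hb : ∀ n, |b n| ≤ C) (n : ℕ) :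
    |(∑ i ∈ Finset.Icc 1 n, b i) / n| ≤ C := by
  rcases Nat.eq_zero_or_pos n with h | h
  · simp [h, hC]
  have hn0 : (0:ℝ) < n := by exact_mod_cast h
  rw [abs_div, abs_of_pos hn0, div_le_iff₀ hn0]
  calc |∑ i ∈ Finset.Icc 1 n, b i| ≤ n * C := sum_abs_le hb n
    _ = C * n := by ring

lemma cesaro_diff {b : ℕ → ℝ} {C : ℝ} (hC : 0 ≤ C) (hb : ∀ n, |b n| ≤ C) (n : ℕ)
    (hn : 1 ≤ n) :
    |(∑ i ∈ Finset.Icc 1 (n+1), b i) / (n+1) - (∑ i ∈ Finset.Icc 1 n, b i) / n|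
      ≤ 2 * C / n := by
  have hn0 : (0:ℝ) < n := by exact_mod_cast hn
  have hn1 : (0:ℝ) < (n:ℝ) + 1 := by linarith
  have hsum : ∑ i ∈ Finset.Icc 1 (n+1), b i = (∑ i ∈ Finset.Icc 1 n, b i) + b (n+1) :=
    Finset.sum_Icc_succ_top (by omega) _
  set T := ∑ i ∈ Finset.Icc 1 n, b i with hT
  have key : (T + b (n+1)) / ((n:ℝ)+1) - T / n = ((n:ℝ) * b (n+1) - T) / ((n:ℝ) * ((n:ℝ)+1)) := by
    field_simp
    ring
  rw [hsum, key]
  rw [abs_div, abs_of_pos (mul_pos hn0 hn1), div_le_iff₀ (mul_pos hn0 hn1)]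
  have h1 : |T| ≤ n * C := sum_abs_le hb n
  have h2 : |(n:ℝ) * b (n+1) - T| ≤ (n:ℝ) * C + (n:ℝ) * C := by
    calc |(n:ℝ) * b (n+1) - T| ≤ |(n:ℝ) * b (n+1)| + |T| := abs_sub _ _
      _ ≤ (n:ℝ) * C + (n:ℝ) * C := by
          refine add_le_add ?_ h1
          rw [abs_mul, abs_of_pos hn0]
          exact mul_le_mul_of_nonneg_left (hb _) hn0.le
  have : 2 * C / (n:ℝ) * ((n:ℝ) * ((n:ℝ)+1)) = 2 * C * ((n:ℝ)+1) := by
    field_simp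
  rw [this]
  nlinarith [hn0]

lemma birk_diff {a : ℕ → ℝ} {C : ℝ} (hC : 0 ≤ C) (ha : ∀ n, |a n| ≤ C) (n : ℕ)
    (hn : 1 ≤ n) :
    |(∑ i ∈ Finset.range (n+1), a i) / (n+1) - (∑ i ∈ Finset.range n, a i) / n|
      ≤ 2 * C / n := by
  have hn0 : (0:ℝ) < n := by exact_mod_cast hn
  have hn1 : (0:ℝ) < (n:ℝ) + 1 := by linarith
  have hsum : ∑ i ∈ Finset.range (n+1), a i = (∑ i ∈ Finset.range n, a i) + a n :=
    Finset.sum_range_succ _ _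
  set T := ∑ i ∈ Finset.range n, a i with hT
  have h1 : |T| ≤ n * C := by
    calc |T| ≤ ∑ i ∈ Finset.range n, |a i| := Finset.abs_sum_le_sum_abs _ _
      _ ≤ ∑ i ∈ Finset.range n, C := Finset.sum_le_sum (fun i _ => ha i)
      _ = n * C := by simp
  have key : (T + a n) / ((n:ℝ)+1) - T / n = ((n:ℝ) * a n - T) / ((n:ℝ) * ((n:ℝ)+1)) := by
    field_simp
    ring
  rw [hsum, key]
  rw [abs_div, abs_of_pos (mul_pos hn0 hn1), div_le_iff₀ (mul_pos hn0 hn1)]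
  have h2 : |(n:ℝ) * a n - T| ≤ (n:ℝ) * C + (n:ℝ) * C := by
    calc |(n:ℝ) * a n - T| ≤ |(n:ℝ) * a n| + |T| := abs_sub _ _
      _ ≤ (n:ℝ) * C + (n:ℝ) * C := by
          refine add_le_add ?_ h1
          rw [abs_mul, abs_of_pos hn0]
          exact mul_le_mul_of_nonneg_left (ha _) hn0.le
  have : 2 * C / (n:ℝ) * ((n:ℝ) * ((n:ℝ)+1)) = 2 * C * ((n:ℝ)+1) := by
    field_simp
  rw [this]
  nlinarith [hn0]

lemma birk_abs {a : ℕ → ℝ} {C : ℝ} (hC : 0 ≤ C) (ha : ∀ n, |a n| ≤ C) (n : ℕ) :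
    |(∑ i ∈ Finset.range n, a i) / n| ≤ C := by
  rcases Nat.eq_zero_or_pos n with h | h
  · simp [h, hC]
  have hn0 : (0:ℝ) < n := by exact_mod_cast h
  rw [abs_div, abs_of_pos hn0, div_le_iff₀ hn0]
  calc |∑ i ∈ Finset.range n, a i| ≤ ∑ i ∈ Finset.range n, |a i| := Finset.abs_sum_le_sum_abs _ _
    _ ≤ ∑ i ∈ Finset.range n, C := Finset.sum_le_sum (fun i _ => ha i)
    _ = C * n := by simp; ring

set_option maxHeartbeats 1000000 in
lemma tauber {b : ℕ → ℝ} {K L : ℝ} (hK : 0 ≤ K)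
    (hb : ∀ n, 1 ≤ n → |b (n+1) - b n| ≤ K / n)
    (hc : Tendsto (fun n : ℕ => (∑ i ∈ Finset.Icc 1 n, b i) / n) atTop (𝓝 L)) :
    Tendsto b atTop (𝓝 L) := by
  have hIoc : ∀ j : ℕ, Finset.Icc 1 j = Finset.Ioc 0 j := by
    intro j; ext x; simp; omega
  rw [Metric.tendsto_atTop] at hc ⊢
  intro ε hε
  set ε' := ε/2 with hε'def
  have hε'0 : 0 < ε' := by positivity
  set η := min 1 (ε'/(4*(K+1))) with hηdef
  have hη0 : 0 < η := lt_min one_pos (by positivity)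
  have hη1 : η ≤ 1 := min_le_left _ _
  have hηK : 2*K*η ≤ ε'/2 := by
    have h := min_le_right 1 (ε'/(4*(K+1)))
    have hK1 : (0:ℝ) < 4*(K+1) := by linarith
    rw [le_div_iff₀ hK1] at h
    nlinarith
  set δ := ε'*η/8 with hδdef
  have hδ0 : 0 < δ := by positivity
  clear_value ε' η δ
  obtain ⟨N₀, hN₀⟩ := hc δ hδ0
  refine ⟨max (N₀+1) (⌈1/η⌉₊ + 1), fun n hn => ?_⟩
  have hnN₀ : N₀ ≤ n := le_trans (by omega) (le_trans (le_max_left _ _) hn)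
  have hn1 : 1 ≤ n := le_trans (by omega) (le_trans (le_max_left _ _) hn)
  have hnceil : ⌈1/η⌉₊ ≤ n := le_trans (by omega) (le_trans (le_max_right _ _) hn)
  have hn0 : (0:ℝ) < n := by exact_mod_cast hn1
  have hηn1 : (1:ℝ) ≤ η * n := by
    have h1 : 1/η ≤ (⌈1/η⌉₊ : ℝ) := Nat.le_ceil _
    have h2 : ((⌈1/η⌉₊:ℕ) : ℝ) ≤ n := by exact_mod_cast hnceil
    rw [div_le_iff₀ hη0] at h1
    nlinarith
  obtain ⟨d, hdlb, hdub'⟩ : ∃ d : ℕ, η*(n:ℝ) ≤ d ∧ (d:ℝ) < η*(n:ℝ) + 1 :=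
    ⟨⌈η*(n:ℝ)⌉₊, Nat.le_ceil _, Nat.ceil_lt_add_one (by positivity)⟩
  set m := n + d with hmdef
  have hdub : (d:ℝ) ≤ 2 * (η * n) := by nlinarith
  have hd1 : 1 ≤ d := by
    by_contra h
    have : d = 0 := by omega
    rw [this] at hdlb
    simp at hdlb
    nlinarith
  have hd0 : (0:ℝ) < d := by
    have : (0:ℝ) < η * n := by positivity
    linarith
  have hmn : (m:ℝ) = (n:ℝ) + d := by push_cast [hmdef]; ring
  have hm0 : (0:ℝ) < m := by rw [hmn]; linarith
  -- sum identities
  set Sn := ∑ i ∈ Finset.Icc 1 n, b i with hSn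
  set Sm := ∑ i ∈ Finset.Icc 1 m, b i with hSm
  have hsplit : Sm = Sn + ∑ i ∈ Finset.Ioc n m, b i := by
    rw [hSm, hSn, hIoc, hIoc]
    exact (Finset.sum_Ioc_consecutive _ (Nat.zero_le n) (by omega)).symm
  have hcard : (Finset.Ioc n m).card = d := by rw [Nat.card_Ioc]; omega
  -- closeness of Cesàro means
  have hcn : |Sn/(n:ℝ) - L| < δ := by
    have := hN₀ n hnN₀
    rwa [Real.dist_eq] at this
  have hcm : |Sm/(m:ℝ) - L| < δ := by
    have := hN₀ m (by omega)
    rwa [Real.dist_eq] at this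
  -- decomposition
  have key : b n - L = (∑ i ∈ Finset.Ioc n m, (b n - b i))/d
      + ((m:ℝ)*(Sm/m - L) - (n:ℝ)*(Sn/n - L))/d := by
    have e1 : ∑ i ∈ Finset.Ioc n m, (b n - b i) = (d:ℝ) * b n - (Sm - Sn) := by
      rw [Finset.sum_sub_distrib, Finset.sum_const, hcard]
      have : Sm - Sn = ∑ i ∈ Finset.Ioc n m, b i := by rw [hsplit]; ring
      rw [this]
      push_cast
      ring
    rw [e1]
    have hmne : (m:ℝ) ≠ 0 := ne_of_gt hm0
    have hnne : (n:ℝ) ≠ 0 := ne_of_gt hn0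
    have hdne : (d:ℝ) ≠ 0 := ne_of_gt hd0
    field_simp
    rw [hmn]
    ring
  -- bound term 1
  have h1 : |(∑ i ∈ Finset.Ioc n m, (b n - b i))/d| ≤ ε'/2 := by
    have hbound : ∀ i ∈ Finset.Ioc n m, |b n - b i| ≤ K * d / n := by
      intro i hi
      simp only [Finset.mem_Ioc] at hi
      rw [abs_sub_comm]
      calc |b i - b n| ≤ K * ((i:ℝ) - n) / n := slow_osc hK hb n i hn1 (by omega)
        _ ≤ K * d / n := by
            have : (i:ℝ) ≤ m := by exact_mod_cast hi.2
            rw [hmn] at this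
            gcongr
            linarith
    have hsum1 : |∑ i ∈ Finset.Ioc n m, (b n - b i)| ≤ d * (K * d / n) := by
      calc |∑ i ∈ Finset.Ioc n m, (b n - b i)| ≤ ∑ i ∈ Finset.Ioc n m, |b n - b i| :=
            Finset.abs_sum_le_sum_abs _ _
        _ ≤ ∑ _i ∈ Finset.Ioc n m, (K * d / n) := Finset.sum_le_sum hbound
        _ = d * (K * d / n) := by rw [Finset.sum_const, hcard]; push_cast; ring
    rw [abs_div, abs_of_pos hd0, div_le_iff₀ hd0]
    calc |∑ i ∈ Finset.Ioc n m, (b n - b i)| ≤ d * (K * d / n) := hsum1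
      _ ≤ d * (2*K*η) := by
          gcongr
          rw [div_le_iff₀ hn0]
          nlinarith [mul_le_mul_of_nonneg_left hdub hK]
      _ ≤ ε'/2 * d := by
          rw [mul_comm]
          exact mul_le_mul_of_nonneg_right hηK hd0.le
  -- bound term 2
  have h2 : |((m:ℝ)*(Sm/m - L) - (n:ℝ)*(Sn/n - L))/d| ≤ ε'/2 := by
    have hm3 : (m:ℝ) ≤ 3 * n := by
      rw [hmn]
      nlinarith [mul_le_mul_of_nonneg_right hη1 hn0.le]
    rw [abs_div, abs_of_pos hd0, div_le_iff₀ hd0]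
    calc |(m:ℝ)*(Sm/m - L) - (n:ℝ)*(Sn/n - L)|
        ≤ |(m:ℝ)*(Sm/m - L)| + |(n:ℝ)*(Sn/n - L)| := abs_sub _ _
      _ ≤ (m:ℝ)*δ + (n:ℝ)*δ := by
          refine add_le_add ?_ ?_
          · rw [abs_mul, abs_of_pos hm0]; exact mul_le_mul_of_nonneg_left hcm.le hm0.le
          · rw [abs_mul, abs_of_pos hn0]; exact mul_le_mul_of_nonneg_left hcn.le hn0.le
      _ ≤ 4*(n:ℝ)*δ := by nlinarith
      _ ≤ ε'/2 * d := by
          have : 4*(n:ℝ)*δ = ε'/2 * (η*n) := by rw [hδdef]; ring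
          rw [this]
          gcongr
  rw [Real.dist_eq, key]
  calc |(∑ i ∈ Finset.Ioc n m, (b n - b i))/d
      + ((m:ℝ)*(Sm/m - L) - (n:ℝ)*(Sn/n - L))/d|
      ≤ |(∑ i ∈ Finset.Ioc n m, (b n - b i))/d|
        + |((m:ℝ)*(Sm/m - L) - (n:ℝ)*(Sn/n - L))/d| := abs_add_le _ _
    _ ≤ ε'/2 + ε'/2 := add_le_add h1 h2
    _ < ε := by rw [hε'def]; linarith

end Aux

/-- If `a` is bounded and the Birkhoff averages `B_n = (1/n) ∑_{i=0}^{n-1} a i` do not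
converge, then for every `k ≥ 1` the `k`-th order Hölder means `H^{(k)}_n` of `(B_n)`
do not converge either. -/
theorem holder_means_of_divergent_birkhoff_diverge (a : ℕ → ℝ)
    (hbdd : ∃ C : ℝ, ∀ n, |a n| ≤ C)
    (hdiv : ¬ ∃ L : ℝ, Tendsto (birk a) atTop (𝓝 L))
    (k : ℕ) (hk : 1 ≤ k) :
    ¬ ∃ L : ℝ, Tendsto (fun n : ℕ => holderMeans (birk a) k n) atTop (𝓝 L) := by
  obtain ⟨C, hC⟩ := hbdd
  have hC0 : 0 ≤ C := le_trans (abs_nonneg _) (hC 0)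
  rintro ⟨L, hL⟩
  apply hdiv
  have hbound : ∀ j n, |holderMeans (birk a) j n| ≤ C := by
    intro j
    induction j with
    | zero => intro n; exact birk_abs hC0 hC n
    | succ j ih =>
        intro n
        show |(∑ i ∈ Finset.Icc 1 n, holderMeans (birk a) j i) / n| ≤ C
        exact cesaro_abs hC0 ih n
  have hdiff : ∀ j n, 1 ≤ n →
      |holderMeans (birk a) j (n+1) - holderMeans (birk a) j n| ≤ 2*C/n := by
    intro j
    cases j with
    | zero =>
        intro n hn
        show |birk a (n+1) - birk a n| ≤ 2*C/n
        simp only [birk]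
        push_cast
        exact birk_diff hC0 hC n hn
    | succ j =>
        intro n hn
        show |(∑ i ∈ Finset.Icc 1 (n+1), holderMeans (birk a) j i) / ((n+1:ℕ):ℝ)
          - (∑ i ∈ Finset.Icc 1 n, holderMeans (birk a) j i) / n| ≤ 2*C/n
        push_cast
        exact cesaro_diff hC0 (hbound j) n hn
  suffices h : ∀ j, (∃ M : ℝ, Tendsto (holderMeans (birk a) j) atTop (𝓝 M)) →
      ∃ M : ℝ, Tendsto (birk a) atTop (𝓝 M) by
    exact h k ⟨L, hL⟩
  intro j
  induction j with
  | zero => intro h; exact h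
  | succ j ih =>
      rintro ⟨M, hM⟩
      apply ih
      refine ⟨M, tauber (K := 2*C) (by positivity) (hdiff j) ?_⟩
      exact hM
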